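/- For (p,q) = (2,3) and every nonnegative integer U: W(U) = 2 if and only if U ∈ {3,4,6,7}, or U = 9·2^a − 1 for some nonnegative integer a, or U = 15·2^a − 1 for some nonnegative integer a. -/

import Mathlib

/-- A strictly chained `(p,q)`-ary partition of `U`: a finite strictly decreasing
list of positive integers of the form `p^a * q^b`, each part divisible by the next,
summing to `U`. -/
def IsSCPartition (p q U : ℕ) (l : List ℕ) : Prop :=
  (∀ x ∈ l, ∃ a b : ℕ, x = p ^ a * q ^ b) ∧
  List.Chain' (fun x y => y ∣ x ∧ y < x) l ∧
  l.sum = U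

/-- The set of strictly chained `(p,q)`-ary partitions of `U`. -/
def Omega (p q U : ℕ) : Set (List ℕ) := {l | IsSCPartition p q U l}

/-- The subset of `Omega p q U` of partitions with no part equal to `1`. -/
def OmegaStar (p q U : ℕ) : Set (List ℕ) := {l | IsSCPartition p q U l ∧ 1 ∉ l}

/-- `W p q U` is the number of strictly chained `(p,q)`-ary partitions of `U`. -/
noncomputable def W (p q U : ℕ) : ℕ := (Omega p q U).ncard

/-- `Wstar p q U` is the number of strictly chained `(p,q)`-ary partitions of `U`
with no part equal to `1`. -/
noncomputable def Wstar (p q U : ℕ) : ℕ := (OmegaStar p q U).ncard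


instance scRelTrans : IsTrans ℕ (fun x y => y ∣ x ∧ y < x) :=
  ⟨fun _ _ _ h1 h2 => ⟨h2.1.trans h1.1, h2.2.trans h1.2⟩⟩

lemma part_pos {U : ℕ} {l : List ℕ} (h : IsSCPartition 2 3 U l) {x : ℕ} (hx : x ∈ l) :
    0 < x := by
  obtain ⟨a, b, rfl⟩ := h.1 x hx
  positivity

lemma length_le_sum : ∀ l : List ℕ, (∀ x ∈ l, 0 < x) → l.length ≤ l.sum
  | [], _ => le_refl _
  | x :: l, h => by
      have h1 := h x (List.mem_cons_self)
      have h2 := length_le_sum l (fun y hy => h y (List.mem_cons_of_mem _ hy))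
      simp only [List.length_cons, List.sum_cons]
      omega

lemma omega_finite (U : ℕ) : (Omega 2 3 U).Finite := by
  apply Set.Finite.subset ((List.finite_length_le (Fin (U + 1)) U).image (List.map Fin.val))
  intro l hl
  have hpos : ∀ x ∈ l, 0 < x := fun x hx => part_pos hl hx
  have hbd : ∀ x ∈ l, x < U + 1 := by
    intro x hx
    have := List.single_le_sum (l := l) (fun y _ => Nat.zero_le y) x hx
    rw [hl.2.2] at this
    omega
  refine ⟨l.pmap (fun x h => (⟨x, h⟩ : Fin (U + 1))) hbd, ?_, ?_⟩
  · simp only [Set.mem_setOf_eq, List.length_pmap]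
    have := length_le_sum l hpos
    rw [hl.2.2] at this
    exact this
  · rw [List.map_pmap]
    simp [List.pmap_eq_map]

lemma omegaStar_finite (U : ℕ) : (OmegaStar 2 3 U).Finite :=
  (omega_finite U).subset (fun l hl => hl.1)

lemma omega_zero : Omega 2 3 0 = {([] : List ℕ)} := by
  ext l
  constructor
  · intro hl
    cases l with
    | nil => rfl
    | cons x t =>
        exfalso
        have hx := part_pos hl (List.mem_cons_self)
        have := hl.2.2
        simp only [List.sum_cons] at this
        omega
  · rintro rfl
    exact ⟨by simp, List.isChain_nil, rfl⟩

lemma W_zero : W 2 3 0 = 1 := by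
  rw [W, omega_zero, Set.ncard_singleton]

lemma three_not_dvd_pow2 (n : ℕ) : ¬ (3 ∣ 2 ^ n) := by
  intro h
  have := Nat.Prime.dvd_of_dvd_pow Nat.prime_three h
  omega

lemma two_not_dvd_pow3 (n : ℕ) : ¬ (2 ∣ 3 ^ n) := by
  intro h
  have := Nat.Prime.dvd_of_dvd_pow Nat.prime_two h
  omega

lemma smooth_div {x d : ℕ} (hx : ∃ a b : ℕ, x = 2 ^ a * 3 ^ b)
    (hd : d = 2 ∨ d = 3 ∨ d = 6) (hdx : d ∣ x) :
    ∃ a b : ℕ, x = d * (2 ^ a * 3 ^ b) := by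
  obtain ⟨a, b, rfl⟩ := hx
  have h2 : 2 ∣ 2 ^ a * 3 ^ b → ∃ a', a = a' + 1 := by
    intro h
    cases a with
    | zero =>
        exfalso
        rw [pow_zero, one_mul] at h
        exact two_not_dvd_pow3 b h
    | succ a' => exact ⟨a', rfl⟩
  have h3 : 3 ∣ 2 ^ a * 3 ^ b → ∃ b', b = b' + 1 := by
    intro h
    cases b with
    | zero =>
        exfalso
        rw [pow_zero, mul_one] at h
        exact three_not_dvd_pow2 a h
    | succ b' => exact ⟨b', rfl⟩
  rcases hd with rfl | rfl | rfl
  · obtain ⟨a', rfl⟩ := h2 hdx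
    exact ⟨a', b, by ring⟩
  · obtain ⟨b', rfl⟩ := h3 hdx
    exact ⟨a, b', by ring⟩
  · have hd2 : 2 ∣ 2 ^ a * 3 ^ b := dvd_trans (by norm_num) hdx
    have hd3 : 3 ∣ 2 ^ a * 3 ^ b := dvd_trans (by norm_num) hdx
    obtain ⟨a', rfl⟩ := h2 hd2
    obtain ⟨b', rfl⟩ := h3 hd3
    exact ⟨a', b', by ring⟩

/-- partitions of `U` all of whose parts are divisible by `d` -/
def Tset (d U : ℕ) : Set (List ℕ) := {l | IsSCPartition 2 3 U l ∧ ∀ x ∈ l, d ∣ x}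

lemma Tset_finite (d U : ℕ) : (Tset d U).Finite :=
  (omega_finite U).subset (fun l hl => hl.1)

lemma Tset_empty {d U : ℕ} (h : ¬ d ∣ U) : Tset d U = ∅ := by
  ext l
  simp only [Set.mem_empty_iff_false, iff_false]
  intro hl
  exact h (hl.1.2.2 ▸ List.dvd_sum hl.2)

lemma sum_map_mul (d : ℕ) : ∀ l : List ℕ, (l.map (fun x => d * x)).sum = d * l.sum
  | [] => by simp
  | x :: l => by
      simp only [List.map_cons, List.sum_cons, sum_map_mul d l]
      ring

lemma Tset_eq_image {d : ℕ} (hd : d = 2 ∨ d = 3 ∨ d = 6) (V : ℕ) :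
    Tset d (d * V) = (List.map (fun x => d * x)) '' Omega 2 3 V := by
  have hdpos : 0 < d := by rcases hd with rfl | rfl | rfl <;> norm_num
  have hdsm : ∃ a b : ℕ, d = 2 ^ a * 3 ^ b := by
    rcases hd with rfl | rfl | rfl
    · exact ⟨1, 0, by norm_num⟩
    · exact ⟨0, 1, by norm_num⟩
    · exact ⟨1, 1, by norm_num⟩
  ext l
  constructor
  · rintro ⟨⟨hform, hchain, hsum⟩, hdvd⟩
    have hml : l = (l.map (fun x => x / d)).map (fun x => d * x) := by
      rw [List.map_map]
      conv_lhs => rw [← List.map_id l]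
      apply List.map_congr_left
      intro x hx
      simp only [Function.comp_apply, id_eq]
      exact (Nat.mul_div_cancel' (hdvd x hx)).symm
    refine ⟨l.map (fun x => x / d), ⟨?_, ?_, ?_⟩, hml.symm⟩
    · intro y hy
      simp only [List.mem_map] at hy
      obtain ⟨x, hx, rfl⟩ := hy
      obtain ⟨a, b, hab⟩ := smooth_div (hform x hx) hd (hdvd x hx)
      exact ⟨a, b, by rw [hab, Nat.mul_div_cancel_left _ hdpos]⟩
    · rw [hml] at hchain
      unfold List.Chain' at hchain
      rw [List.isChain_map] at hchain
      refine hchain.imp ?_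
      rintro a b ⟨h1, h2⟩
      constructor
      · exact (mul_dvd_mul_iff_left (by omega : d ≠ 0)).mp h1
      · exact lt_of_mul_lt_mul_left h2 (Nat.zero_le d)
    · have : ((l.map (fun x => x / d)).map (fun x => d * x)).sum = d * V := by
        rw [← hml, hsum]
      rw [sum_map_mul] at this
      exact Nat.eq_of_mul_eq_mul_left hdpos this
  · rintro ⟨m, ⟨hform, hchain, hsum⟩, rfl⟩
    obtain ⟨da, db, hdab⟩ := hdsm
    refine ⟨⟨?_, ?_, ?_⟩, ?_⟩
    · intro y hy
      simp only [List.mem_map] at hy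
      obtain ⟨x, hx, rfl⟩ := hy
      obtain ⟨a, b, rfl⟩ := hform x hx
      exact ⟨da + a, db + b, by rw [hdab, pow_add, pow_add]; ring⟩
    · unfold List.Chain'
      rw [List.isChain_map]
      refine hchain.imp ?_
      rintro a b ⟨h1, h2⟩
      exact ⟨mul_dvd_mul_left d h1, by exact (Nat.mul_lt_mul_left hdpos).mpr h2⟩
    · rw [sum_map_mul, hsum]
    · intro y hy
      simp only [List.mem_map] at hy
      obtain ⟨x, _, rfl⟩ := hy
      exact Dvd.intro x rfl

lemma Tset_ncard {d : ℕ} (hd : d = 2 ∨ d = 3 ∨ d = 6) (V : ℕ) :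
    (Tset d (d * V)).ncard = W 2 3 V := by
  rw [Tset_eq_image hd V, W]
  apply Set.ncard_image_of_injective
  apply List.map_injective_iff.mpr
  intro x y hxy
  have hdpos : 0 < d := by rcases hd with rfl | rfl | rfl <;> norm_num
  exact Nat.eq_of_mul_eq_mul_left hdpos hxy

lemma omegaStar_eq_union (U : ℕ) : OmegaStar 2 3 U = Tset 2 U ∪ Tset 3 U := by
  ext l
  constructor
  · rintro ⟨hsc, h1⟩
    rcases eq_or_ne l [] with rfl | hne
    · exact Or.inl ⟨hsc, by simp⟩
    · set m := l.getLast hne with hm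
      have hmem : m ∈ l := List.getLast_mem hne
      have hdvd : ∀ x ∈ l, m ∣ x := by
        have hp : List.Pairwise (fun x y => y ∣ x ∧ y < x) l :=
          List.isChain_iff_pairwise.mp hsc.2.1
        intro x hx
        have hl : l.dropLast ++ [m] = l := List.dropLast_append_getLast hne
        rw [← hl] at hp hx
        rw [List.pairwise_append] at hp
        rcases List.mem_append.mp hx with hx | hx
        · exact (hp.2.2 x hx m (by simp)).1
        · simp only [List.mem_singleton] at hx
          subst hx
          exact dvd_rfl
      obtain ⟨a, b, hab⟩ := hsc.1 m hmem
      have hm1 : m ≠ 1 := fun h => h1 (h ▸ hmem)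
      have : 2 ∣ m ∨ 3 ∣ m := by
        rcases Nat.eq_zero_or_pos a with rfl | ha
        · rcases Nat.eq_zero_or_pos b with rfl | hb
          · exfalso; apply hm1; rw [hab]; norm_num
          · right; rw [hab]; simp only [pow_zero, one_mul]
            exact dvd_pow_self 3 (by omega : b ≠ 0)
        · left; rw [hab]
          exact Dvd.dvd.mul_right (dvd_pow_self 2 (by omega : a ≠ 0)) _
      rcases this with h | h
      · exact Or.inl ⟨hsc, fun x hx => h.trans (hdvd x hx)⟩
      · exact Or.inr ⟨hsc, fun x hx => h.trans (hdvd x hx)⟩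
  · rintro (⟨hsc, hdvd⟩ | ⟨hsc, hdvd⟩) <;>
      refine ⟨hsc, fun h1 => ?_⟩
    · have := hdvd 1 h1; omega
    · have := hdvd 1 h1; omega

lemma Tset_inter (U : ℕ) : Tset 2 U ∩ Tset 3 U = Tset 6 U := by
  ext l
  constructor
  · rintro ⟨⟨hsc, h2⟩, ⟨_, h3⟩⟩
    refine ⟨hsc, fun x hx => ?_⟩
    have := h2 x hx; have := h3 x hx; omega
  · rintro ⟨hsc, h6⟩
    exact ⟨⟨hsc, fun x hx => by have := h6 x hx; omega⟩,
           ⟨hsc, fun x hx => by have := h6 x hx; omega⟩⟩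

lemma Wstar_none {U : ℕ} (h2 : ¬ 2 ∣ U) (h3 : ¬ 3 ∣ U) : Wstar 2 3 U = 0 := by
  rw [Wstar, omegaStar_eq_union, Tset_empty h2, Tset_empty h3]
  simp

lemma Wstar_two (m : ℕ) (h3 : ¬ 3 ∣ m) : Wstar 2 3 (2 * m) = W 2 3 m := by
  have h3' : ¬ 3 ∣ 2 * m := by omega
  rw [Wstar, omegaStar_eq_union, Tset_empty h3', Set.union_empty,
    Tset_ncard (Or.inl rfl)]

lemma Wstar_three (m : ℕ) (h2 : ¬ 2 ∣ m) : Wstar 2 3 (3 * m) = W 2 3 m := by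
  have h2' : ¬ 2 ∣ 3 * m := by omega
  rw [Wstar, omegaStar_eq_union, Tset_empty h2', Set.empty_union,
    Tset_ncard (Or.inr (Or.inl rfl))]

lemma Wstar_six (k : ℕ) :
    Wstar 2 3 (6 * k) + W 2 3 k = W 2 3 (3 * k) + W 2 3 (2 * k) := by
  have h := Set.ncard_union_add_ncard_inter (Tset 2 (6 * k)) (Tset 3 (6 * k))
    (Tset_finite _ _) (Tset_finite _ _)
  rw [Tset_inter] at h
  have hA : (Tset 2 (6 * k)).ncard = W 2 3 (3 * k) := by
    rw [show (6 : ℕ) * k = 2 * (3 * k) by ring]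
    exact Tset_ncard (Or.inl rfl) _
  have hB : (Tset 3 (6 * k)).ncard = W 2 3 (2 * k) := by
    rw [show (6 : ℕ) * k = 3 * (2 * k) by ring]
    exact Tset_ncard (Or.inr (Or.inl rfl)) _
  have hC : (Tset 6 (6 * k)).ncard = W 2 3 k := by
    exact Tset_ncard (Or.inr (Or.inr rfl)) _
  rw [hA, hB, hC] at h
  rw [Wstar, omegaStar_eq_union]
  omega

lemma append_one_mem {V : ℕ} {l : List ℕ} (h : l ∈ OmegaStar 2 3 V) :
    l ++ [1] ∈ Omega 2 3 (V + 1) := by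
  obtain ⟨⟨hform, hchain, hsum⟩, h1⟩ := h
  refine ⟨?_, ?_, ?_⟩
  · intro x hx
    rcases List.mem_append.mp hx with hx | hx
    · exact hform x hx
    · simp only [List.mem_singleton] at hx
      exact ⟨0, 0, by simp [hx]⟩
  · unfold List.Chain'
    rw [List.isChain_iff_pairwise, List.pairwise_append]
    refine ⟨List.isChain_iff_pairwise.mp hchain, by simp, ?_⟩
    intro x hx y hy
    simp only [List.mem_singleton] at hy
    subst hy
    have hpos : 0 < x := part_pos ⟨hform, hchain, hsum⟩ hx
    have hne : x ≠ 1 := fun hh => h1 (hh ▸ hx)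
    exact ⟨one_dvd x, by omega⟩
  · simp [hsum]

lemma omega_split (U : ℕ) :
    Omega 2 3 (U + 1) =
      OmegaStar 2 3 (U + 1) ∪ (fun l => l ++ [1]) '' OmegaStar 2 3 U := by
  ext l
  constructor
  · intro hl
    by_cases h1 : 1 ∈ l
    · right
      obtain ⟨s, t, rfl⟩ := List.append_of_mem h1
      have hp : List.Pairwise (fun x y => y ∣ x ∧ y < x) (s ++ 1 :: t) :=
        List.isChain_iff_pairwise.mp hl.2.1
      rw [List.pairwise_append] at hp
      have ht : t = [] := by
        cases t with
        | nil => rfl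
        | cons y t' =>
            exfalso
            have := (List.pairwise_cons.mp hp.2.1).1 y (by simp)
            have hpos : 0 < y := part_pos hl (by simp)
            omega
      subst ht
      refine ⟨s, ⟨⟨?_, ?_, ?_⟩, ?_⟩, rfl⟩
      · exact fun x hx => hl.1 x (by simp [hx])
      · exact List.isChain_iff_pairwise.mpr hp.1
      · have := hl.2.2
        simp only [List.sum_append, List.sum_cons, List.sum_nil] at this
        omega
      · intro hs
        have := (hp.2.2 1 hs 1 (by simp)).2
        omega
    · exact Or.inl ⟨hl, h1⟩
  · rintro (hl | ⟨m, hm, rfl⟩)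
    · exact hl.1
    · exact append_one_mem hm

lemma W_split (U : ℕ) : W 2 3 (U + 1) = Wstar 2 3 (U + 1) + Wstar 2 3 U := by
  have hinj : Function.Injective (fun l : List ℕ => l ++ [1]) := by
    intro x y hxy
    have := congrArg List.dropLast hxy
    simpa using this
  have hdisj : Disjoint (OmegaStar 2 3 (U + 1)) ((fun l => l ++ [1]) '' OmegaStar 2 3 U) := by
    rw [Set.disjoint_left]
    rintro l ⟨_, h1⟩ ⟨m, _, rfl⟩
    exact h1 (by simp)
  rw [W, omega_split, Set.ncard_union_eq hdisj (omegaStar_finite _)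
    ((omegaStar_finite U).image _), Set.ncard_image_of_injective _ hinj]
  rfl

lemma W_split' {U V : ℕ} (h : U = V + 1) : W 2 3 U = Wstar 2 3 U + Wstar 2 3 V := by
  subst h; exact W_split V

lemma Wstar_two' {U m : ℕ} (h : U = 2 * m) (h3 : ¬ 3 ∣ m) : Wstar 2 3 U = W 2 3 m := by
  subst h; exact Wstar_two m h3

lemma Wstar_three' {U m : ℕ} (h : U = 3 * m) (h2 : ¬ 2 ∣ m) : Wstar 2 3 U = W 2 3 m := by
  subst h; exact Wstar_three m h2

lemma Wstar_six' {U k : ℕ} (h : U = 6 * k) :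
    Wstar 2 3 U + W 2 3 k = W 2 3 (3 * k) + W 2 3 (2 * k) := by
  subst h; exact Wstar_six k

lemma Wstar_zero : Wstar 2 3 0 = 1 := by
  have h : OmegaStar 2 3 0 = {([] : List ℕ)} := by
    ext l
    constructor
    · rintro ⟨hl, _⟩
      have : l ∈ Omega 2 3 0 := hl
      rwa [omega_zero] at this
    · rintro rfl
      exact ⟨⟨by simp, List.isChain_nil, rfl⟩, by simp⟩
  rw [Wstar, h, Set.ncard_singleton]

lemma omega_nonempty (U : ℕ) : (Omega 2 3 U).Nonempty := by
  induction U using Nat.strong_induction_on with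
  | _ U ih =>
    rcases Nat.eq_zero_or_pos U with rfl | hU
    · exact ⟨[], by rw [omega_zero]; rfl⟩
    · have half : ∀ m : ℕ, 0 < m → m < U → ∃ l, l ∈ Tset 2 (2 * m) ∨ True := fun _ _ _ => ⟨[], Or.inr trivial⟩
      rcases Nat.even_or_odd U with ⟨m, hm⟩ | ⟨m, hm⟩
      · obtain ⟨l, hl⟩ := ih m (by omega)
        refine ⟨l.map (fun x => 2 * x), ?_⟩
        have : l.map (fun x => 2 * x) ∈ Tset 2 (2 * m) := by
          rw [Tset_eq_image (Or.inl rfl)]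
          exact ⟨l, hl, rfl⟩
        have h2 : U = 2 * m := by omega
        rw [h2]
        exact this.1
      · obtain ⟨l, hl⟩ := ih m (by omega)
        have hT : l.map (fun x => 2 * x) ∈ Tset 2 (2 * m) := by
          rw [Tset_eq_image (Or.inl rfl)]
          exact ⟨l, hl, rfl⟩
        have hS : l.map (fun x => 2 * x) ∈ OmegaStar 2 3 (2 * m) := by
          rw [omegaStar_eq_union]
          exact Or.inl hT
        have := append_one_mem hS
        refine ⟨l.map (fun x => 2 * x) ++ [1], ?_⟩
        have h2 : U = 2 * m + 1 := by omega
        rw [h2]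
        exact this
lemma W_pos (U : ℕ) : 0 < W 2 3 U :=
  (Set.ncard_pos (omega_finite U)).mpr (omega_nonempty U)

lemma W_le_double (V : ℕ) : W 2 3 V ≤ W 2 3 (2 * V) := by
  have h1 : (Tset 2 (2 * V)).ncard = W 2 3 V := Tset_ncard (Or.inl rfl) V
  rw [← h1, W]
  exact Set.ncard_le_ncard (fun l hl => hl.1) (omega_finite _)

lemma R0 (k : ℕ) : W 2 3 (6 * k) + W 2 3 k = W 2 3 (3 * k) + W 2 3 (2 * k) := by
  rcases Nat.eq_zero_or_pos k with rfl | hk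
  · norm_num
  · have h1 : W 2 3 (6 * k) = Wstar 2 3 (6 * k) + Wstar 2 3 (6 * k - 1) :=
      W_split' (by omega)
    have h2 : Wstar 2 3 (6 * k - 1) = 0 := Wstar_none (by omega) (by omega)
    have h3 := Wstar_six' (rfl : 6 * k = 6 * k)
    omega

lemma R1 (k : ℕ) : W 2 3 (6 * k + 1) + W 2 3 k = W 2 3 (3 * k) + W 2 3 (2 * k) := by
  have h1 : W 2 3 (6 * k + 1) = Wstar 2 3 (6 * k + 1) + Wstar 2 3 (6 * k) :=
    W_split' rfl
  have h2 : Wstar 2 3 (6 * k + 1) = 0 := Wstar_none (by omega) (by omega)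
  have h3 := Wstar_six' (rfl : 6 * k = 6 * k)
  omega

lemma R2 (k : ℕ) : W 2 3 (6 * k + 2) = W 2 3 (3 * k + 1) := by
  have h1 : W 2 3 (6 * k + 2) = Wstar 2 3 (6 * k + 2) + Wstar 2 3 (6 * k + 1) :=
    W_split' (by omega)
  have h2 : Wstar 2 3 (6 * k + 1) = 0 := Wstar_none (by omega) (by omega)
  have h3 : Wstar 2 3 (6 * k + 2) = W 2 3 (3 * k + 1) :=
    Wstar_two' (by ring) (by omega)
  omega

lemma R3 (k : ℕ) : W 2 3 (6 * k + 3) = W 2 3 (2 * k + 1) + W 2 3 (3 * k + 1) := by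
  have h1 : W 2 3 (6 * k + 3) = Wstar 2 3 (6 * k + 3) + Wstar 2 3 (6 * k + 2) :=
    W_split' (by omega)
  have h2 : Wstar 2 3 (6 * k + 3) = W 2 3 (2 * k + 1) :=
    Wstar_three' (by ring) (by omega)
  have h3 : Wstar 2 3 (6 * k + 2) = W 2 3 (3 * k + 1) :=
    Wstar_two' (by ring) (by omega)
  omega

lemma R4 (k : ℕ) : W 2 3 (6 * k + 4) = W 2 3 (3 * k + 2) + W 2 3 (2 * k + 1) := by
  have h1 : W 2 3 (6 * k + 4) = Wstar 2 3 (6 * k + 4) + Wstar 2 3 (6 * k + 3) :=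
    W_split' (by omega)
  have h2 : Wstar 2 3 (6 * k + 4) = W 2 3 (3 * k + 2) :=
    Wstar_two' (by ring) (by omega)
  have h3 : Wstar 2 3 (6 * k + 3) = W 2 3 (2 * k + 1) :=
    Wstar_three' (by ring) (by omega)
  omega

lemma R5 (k : ℕ) : W 2 3 (6 * k + 5) = W 2 3 (3 * k + 2) := by
  have h1 : W 2 3 (6 * k + 5) = Wstar 2 3 (6 * k + 5) + Wstar 2 3 (6 * k + 4) :=
    W_split' (by omega)
  have h2 : Wstar 2 3 (6 * k + 5) = 0 := Wstar_none (by omega) (by omega)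
  have h3 : Wstar 2 3 (6 * k + 4) = W 2 3 (3 * k + 2) :=
    Wstar_two' (by ring) (by omega)
  omega

lemma pow2_succ (a : ℕ) : (2:ℕ) ^ (a + 1) = 2 * 2 ^ a := by rw [pow_succ]; ring

lemma pow2_cases (a : ℕ) : (2:ℕ)^a = 1 ∨ (2:ℕ)^a = 2 ∨ (2:ℕ)^a = 4 ∨ (2:ℕ)^a = 8 ∨ 16 ≤ (2:ℕ)^a := by
  induction a with
  | zero => simp
  | succ n ih => rw [pow2_succ]; omega

lemma Wv1 : W 2 3 1 = 1 := by have h := R1 0; norm_num [W_zero] at h; omega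
lemma Wv2 : W 2 3 2 = 1 := by have h := R2 0; norm_num [Wv1] at h; omega
lemma Wv3 : W 2 3 3 = 2 := by have h := R3 0; norm_num [Wv1] at h; omega
lemma Wv4 : W 2 3 4 = 2 := by have h := R4 0; norm_num [Wv1, Wv2] at h; omega
lemma Wv5 : W 2 3 5 = 1 := by have h := R5 0; norm_num [Wv2] at h; omega
lemma Wv6 : W 2 3 6 = 2 := by have h := R0 1; norm_num [Wv1, Wv2, Wv3] at h; omega
lemma Wv7 : W 2 3 7 = 2 := by have h := R1 1; norm_num [Wv1, Wv2, Wv3] at h; omega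
lemma Wv8 : W 2 3 8 = 2 := by have h := R2 1; norm_num [Wv4] at h; omega
lemma Wv9 : W 2 3 9 = 4 := by have h := R3 1; norm_num [Wv3, Wv4] at h; omega
lemma Wv10 : W 2 3 10 = 3 := by have h := R4 1; norm_num [Wv3, Wv5] at h; omega
lemma Wv11 : W 2 3 11 = 1 := by have h := R5 1; norm_num [Wv5] at h; omega
lemma Wv12 : W 2 3 12 = 3 := by have h := R0 2; norm_num [Wv2, Wv4, Wv6] at h; omega
lemma Wv13 : W 2 3 13 = 3 := by have h := R1 2; norm_num [Wv2, Wv4, Wv6] at h; omega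

abbrev inS1 (U : ℕ) : Prop := U = 0 ∨ U = 1 ∨ ∃ a : ℕ, U = 3 * 2 ^ a - 1

abbrev inS2 (U : ℕ) : Prop :=
  U = 3 ∨ U = 4 ∨ U = 6 ∨ U = 7 ∨
    (∃ a : ℕ, U = 9 * 2 ^ a - 1) ∨ (∃ a : ℕ, U = 15 * 2 ^ a - 1)

lemma classify (U : ℕ) : (inS1 U → W 2 3 U = 1) ∧ (inS2 U → W 2 3 U = 2) ∧
    (¬ inS1 U → ¬ inS2 U → 3 ≤ W 2 3 U) := by
  induction U using Nat.strong_induction_on with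
  | _ U ih =>
  have ihS1 : ∀ m, m < U → inS1 m → W 2 3 m = 1 := fun m hm h => (ih m hm).1 h
  have ihS2 : ∀ m, m < U → inS2 m → W 2 3 m = 2 := fun m hm h => (ih m hm).2.1 h
  have ihW1 : ∀ m, m < U → W 2 3 m = 1 → inS1 m := by
    intro m hm hw
    by_cases hs1 : inS1 m
    · exact hs1
    by_cases hs2 : inS2 m
    · have := (ih m hm).2.1 hs2; omega
    · have := (ih m hm).2.2 hs1 hs2; omega
  have ihge : ∀ m, m < U → ¬ inS1 m → ¬ inS2 m → 3 ≤ W 2 3 m :=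
    fun m hm h1 h2 => (ih m hm).2.2 h1 h2
  by_cases hsmall : U ≤ 13
  · interval_cases U
    · refine ⟨fun h => ?_, fun h => ?_, fun h1 h2 => ?_⟩
      · exact W_zero
      · exfalso
        rcases h with h|h|h|h|⟨a,ha⟩|⟨a,ha⟩
        · omega
        · omega
        · omega
        · omega
        · rcases pow2_cases a with h'|h'|h'|h'|h' <;> omega
        · rcases pow2_cases a with h'|h'|h'|h'|h' <;> omega
      · exact absurd (Or.inl rfl : inS1 0) h1
    · refine ⟨fun h => ?_, fun h => ?_, fun h1 h2 => ?_⟩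
      · exact Wv1
      · exfalso
        rcases h with h|h|h|h|⟨a,ha⟩|⟨a,ha⟩
        · omega
        · omega
        · omega
        · omega
        · rcases pow2_cases a with h'|h'|h'|h'|h' <;> omega
        · rcases pow2_cases a with h'|h'|h'|h'|h' <;> omega
      · exact absurd (Or.inr (Or.inl rfl) : inS1 1) h1
    · refine ⟨fun h => ?_, fun h => ?_, fun h1 h2 => ?_⟩
      · exact Wv2
      · exfalso
        rcases h with h|h|h|h|⟨a,ha⟩|⟨a,ha⟩
        · omega
        · omega
        · omega
        · omega
        · rcases pow2_cases a with h'|h'|h'|h'|h' <;> omega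
        · rcases pow2_cases a with h'|h'|h'|h'|h' <;> omega
      · exact absurd (Or.inr (Or.inr ⟨0, by norm_num⟩) : inS1 2) h1
    · refine ⟨fun h => ?_, fun h => ?_, fun h1 h2 => ?_⟩
      · exfalso
        rcases h with h|h|⟨a,ha⟩
        · omega
        · omega
        · rcases pow2_cases a with h'|h'|h'|h'|h' <;> omega
      · exact Wv3
      · exact absurd (Or.inl rfl : inS2 3) h2
    · refine ⟨fun h => ?_, fun h => ?_, fun h1 h2 => ?_⟩
      · exfalso
        rcases h with h|h|⟨a,ha⟩
        · omega
        · omega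
        · rcases pow2_cases a with h'|h'|h'|h'|h' <;> omega
      · exact Wv4
      · exact absurd (Or.inr (Or.inl rfl) : inS2 4) h2
    · refine ⟨fun h => ?_, fun h => ?_, fun h1 h2 => ?_⟩
      · exact Wv5
      · exfalso
        rcases h with h|h|h|h|⟨a,ha⟩|⟨a,ha⟩
        · omega
        · omega
        · omega
        · omega
        · rcases pow2_cases a with h'|h'|h'|h'|h' <;> omega
        · rcases pow2_cases a with h'|h'|h'|h'|h' <;> omega
      · exact absurd (Or.inr (Or.inr ⟨1, by norm_num⟩) : inS1 5) h1
    · refine ⟨fun h => ?_, fun h => ?_, fun h1 h2 => ?_⟩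
      · exfalso
        rcases h with h|h|⟨a,ha⟩
        · omega
        · omega
        · rcases pow2_cases a with h'|h'|h'|h'|h' <;> omega
      · exact Wv6
      · exact absurd (Or.inr (Or.inr (Or.inl rfl)) : inS2 6) h2
    · refine ⟨fun h => ?_, fun h => ?_, fun h1 h2 => ?_⟩
      · exfalso
        rcases h with h|h|⟨a,ha⟩
        · omega
        · omega
        · rcases pow2_cases a with h'|h'|h'|h'|h' <;> omega
      · exact Wv7
      · exact absurd (Or.inr (Or.inr (Or.inr (Or.inl rfl))) : inS2 7) h2
    · refine ⟨fun h => ?_, fun h => ?_, fun h1 h2 => ?_⟩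
      · exfalso
        rcases h with h|h|⟨a,ha⟩
        · omega
        · omega
        · rcases pow2_cases a with h'|h'|h'|h'|h' <;> omega
      · exact Wv8
      · exact absurd (Or.inr (Or.inr (Or.inr (Or.inr (Or.inl ⟨0, by norm_num⟩)))) : inS2 8) h2
    · refine ⟨fun h => ?_, fun h => ?_, fun h1 h2 => ?_⟩
      · exfalso
        rcases h with h|h|⟨a,ha⟩
        · omega
        · omega
        · rcases pow2_cases a with h'|h'|h'|h'|h' <;> omega
      · exfalso
        rcases h with h|h|h|h|⟨a,ha⟩|⟨a,ha⟩
        · omega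
        · omega
        · omega
        · omega
        · rcases pow2_cases a with h'|h'|h'|h'|h' <;> omega
        · rcases pow2_cases a with h'|h'|h'|h'|h' <;> omega
      · have := Wv9; omega
    · refine ⟨fun h => ?_, fun h => ?_, fun h1 h2 => ?_⟩
      · exfalso
        rcases h with h|h|⟨a,ha⟩
        · omega
        · omega
        · rcases pow2_cases a with h'|h'|h'|h'|h' <;> omega
      · exfalso
        rcases h with h|h|h|h|⟨a,ha⟩|⟨a,ha⟩
        · omega
        · omega
        · omega
        · omega
        · rcases pow2_cases a with h'|h'|h'|h'|h' <;> omega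
        · rcases pow2_cases a with h'|h'|h'|h'|h' <;> omega
      · have := Wv10; omega
    · refine ⟨fun h => ?_, fun h => ?_, fun h1 h2 => ?_⟩
      · exact Wv11
      · exfalso
        rcases h with h|h|h|h|⟨a,ha⟩|⟨a,ha⟩
        · omega
        · omega
        · omega
        · omega
        · rcases pow2_cases a with h'|h'|h'|h'|h' <;> omega
        · rcases pow2_cases a with h'|h'|h'|h'|h' <;> omega
      · exact absurd (Or.inr (Or.inr ⟨2, by norm_num⟩) : inS1 11) h1
    · refine ⟨fun h => ?_, fun h => ?_, fun h1 h2 => ?_⟩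
      · exfalso
        rcases h with h|h|⟨a,ha⟩
        · omega
        · omega
        · rcases pow2_cases a with h'|h'|h'|h'|h' <;> omega
      · exfalso
        rcases h with h|h|h|h|⟨a,ha⟩|⟨a,ha⟩
        · omega
        · omega
        · omega
        · omega
        · rcases pow2_cases a with h'|h'|h'|h'|h' <;> omega
        · rcases pow2_cases a with h'|h'|h'|h'|h' <;> omega
      · have := Wv12; omega
    · refine ⟨fun h => ?_, fun h => ?_, fun h1 h2 => ?_⟩
      · exfalso
        rcases h with h|h|⟨a,ha⟩
        · omega
        · omega
        · rcases pow2_cases a with h'|h'|h'|h'|h' <;> omega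
      · exfalso
        rcases h with h|h|h|h|⟨a,ha⟩|⟨a,ha⟩
        · omega
        · omega
        · omega
        · omega
        · rcases pow2_cases a with h'|h'|h'|h'|h' <;> omega
        · rcases pow2_cases a with h'|h'|h'|h'|h' <;> omega
      · have := Wv13; omega
  · push_neg at hsmall
    have hr : U % 6 = 0 ∨ U % 6 = 1 ∨ U % 6 = 2 ∨ U % 6 = 3 ∨ U % 6 = 4 ∨ U % 6 = 5 := by
      omega
    rcases hr with hr|hr|hr|hr|hr|hr
    · -- U %% 6 = 0
      obtain ⟨k, rfl⟩ : ∃ k, U = 6 * k := ⟨U / 6, by omega⟩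
      refine ⟨fun h => ?_, fun h => ?_, fun h1 h2 => ?_⟩
      · exfalso
        rcases h with h|h|⟨a,ha⟩
        · omega
        · omega
        · have hp : (1:ℕ) ≤ 2^a := Nat.one_le_two_pow
          omega
      · exfalso
        rcases h with h|h|h|h|⟨a,ha⟩|⟨a,ha⟩
        · omega
        · omega
        · omega
        · omega
        · have hp : (1:ℕ) ≤ 2^a := Nat.one_le_two_pow
          omega
        · have hp : (1:ℕ) ≤ 2^a := Nat.one_le_two_pow
          omega
      · have hrec := R0 k
        have hmono := W_le_double k
        have h3 : 3 ≤ W 2 3 (3 * k) := by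
          apply ihge (3 * k) (by omega)
          · intro hs
            rcases hs with h|h|⟨a,ha⟩
            · omega
            · omega
            · have hp : (1:ℕ) ≤ 2^a := Nat.one_le_two_pow
              omega
          · intro hs
            rcases hs with h|h|h|h|⟨a,ha⟩|⟨a,ha⟩
            · omega
            · omega
            · omega
            · omega
            · have hp : (1:ℕ) ≤ 2^a := Nat.one_le_two_pow
              omega
            · have hp : (1:ℕ) ≤ 2^a := Nat.one_le_two_pow
              omega
        omega
    · -- U %% 6 = 1
      obtain ⟨k, rfl⟩ : ∃ k, U = 6 * k + 1 := ⟨U / 6, by omega⟩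
      refine ⟨fun h => ?_, fun h => ?_, fun h1 h2 => ?_⟩
      · exfalso
        rcases h with h|h|⟨a,ha⟩
        · omega
        · omega
        · have hp : (1:ℕ) ≤ 2^a := Nat.one_le_two_pow
          omega
      · exfalso
        rcases h with h|h|h|h|⟨a,ha⟩|⟨a,ha⟩
        · omega
        · omega
        · omega
        · omega
        · have hp : (1:ℕ) ≤ 2^a := Nat.one_le_two_pow
          omega
        · have hp : (1:ℕ) ≤ 2^a := Nat.one_le_two_pow
          omega
      · have hrec := R1 k
        have hmono := W_le_double k
        have h3 : 3 ≤ W 2 3 (3 * k) := by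
          apply ihge (3 * k) (by omega)
          · intro hs
            rcases hs with h|h|⟨a,ha⟩
            · omega
            · omega
            · have hp : (1:ℕ) ≤ 2^a := Nat.one_le_two_pow
              omega
          · intro hs
            rcases hs with h|h|h|h|⟨a,ha⟩|⟨a,ha⟩
            · omega
            · omega
            · omega
            · omega
            · have hp : (1:ℕ) ≤ 2^a := Nat.one_le_two_pow
              omega
            · have hp : (1:ℕ) ≤ 2^a := Nat.one_le_two_pow
              omega
        omega
    · -- U % 6 = 2
      obtain ⟨k, rfl⟩ : ∃ k, U = 6 * k + 2 := ⟨U / 6, by omega⟩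
      refine ⟨fun h => ?_, fun h => ?_, fun h1 h2 => ?_⟩
      · exfalso
        rcases h with h|h|⟨a,ha⟩
        · omega
        · omega
        · have hp : (1:ℕ) ≤ 2^a := Nat.one_le_two_pow
          cases a with
          | zero => rw [pow_zero] at ha; omega
          | succ b =>
              have hb : (1:ℕ) ≤ 2^b := Nat.one_le_two_pow
              have hs := pow2_succ b
              omega
      · rcases h with h|h|h|h|⟨a,ha⟩|⟨a,ha⟩
        · exact absurd h (by omega)
        · exact absurd h (by omega)
        · exact absurd h (by omega)
        · exact absurd h (by omega)
        · exfalso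
          have hp : (1:ℕ) ≤ 2^a := Nat.one_le_two_pow
          cases a with
          | zero => rw [pow_zero] at ha; omega
          | succ b =>
              have hb : (1:ℕ) ≤ 2^b := Nat.one_le_two_pow
              have hs := pow2_succ b
              omega
        · have hp : (1:ℕ) ≤ 2^a := Nat.one_le_two_pow
          cases a with
          | zero =>
              rw [pow_zero] at ha
              have hk : k = 2 := by omega
              subst hk
              rw [R2 2]
              exact ihS2 (3 * 2 + 1) (by omega)
                (Or.inr (Or.inr (Or.inr (Or.inl (by norm_num)))))
          | succ b =>
              exfalso
              have hb : (1:ℕ) ≤ 2^b := Nat.one_le_two_pow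
              have hs := pow2_succ b
              omega
      · rw [R2 k]
        apply ihge (3 * k + 1) (by omega)
        · intro hs
          rcases hs with h|h|⟨a,ha⟩
          · omega
          · omega
          · have hp : (1:ℕ) ≤ 2^a := Nat.one_le_two_pow
            omega
        · intro hs
          rcases hs with h|h|h|h|⟨a,ha⟩|⟨a,ha⟩
          · omega
          · omega
          · omega
          · exact h2 (Or.inr (Or.inr (Or.inr (Or.inr (Or.inr
              ⟨0, by simp only [pow_zero, mul_one]; omega⟩)))))
          · have hp : (1:ℕ) ≤ 2^a := Nat.one_le_two_pow
            omega
          · have hp : (1:ℕ) ≤ 2^a := Nat.one_le_two_pow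
            omega
    · -- U % 6 = 3
      obtain ⟨k, rfl⟩ : ∃ k, U = 6 * k + 3 := ⟨U / 6, by omega⟩
      refine ⟨fun h => ?_, fun h => ?_, fun h1 h2 => ?_⟩
      · exfalso
        rcases h with h|h|⟨a,ha⟩
        · omega
        · omega
        · have hp : (1:ℕ) ≤ 2^a := Nat.one_le_two_pow
          omega
      · exfalso
        rcases h with h|h|h|h|⟨a,ha⟩|⟨a,ha⟩
        · omega
        · omega
        · omega
        · omega
        · have hp : (1:ℕ) ≤ 2^a := Nat.one_le_two_pow
          omega
        · have hp : (1:ℕ) ≤ 2^a := Nat.one_le_two_pow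
          omega
      · have hrec := R3 k
        have hp1 := W_pos (2 * k + 1)
        have hg : 2 ≤ W 2 3 (3 * k + 1) := by
          have hp2 := W_pos (3 * k + 1)
          by_cases hw : W 2 3 (3 * k + 1) = 1
          · exfalso
            have hB := ihW1 (3 * k + 1) (by omega) hw
            rcases hB with h|h|⟨a,ha⟩
            · omega
            · omega
            · have hp : (1:ℕ) ≤ 2^a := Nat.one_le_two_pow
              omega
          · omega
        omega
    · -- U % 6 = 4
      obtain ⟨k, rfl⟩ : ∃ k, U = 6 * k + 4 := ⟨U / 6, by omega⟩
      refine ⟨fun h => ?_, fun h => ?_, fun h1 h2 => ?_⟩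
      · exfalso
        rcases h with h|h|⟨a,ha⟩
        · omega
        · omega
        · have hp : (1:ℕ) ≤ 2^a := Nat.one_le_two_pow
          omega
      · exfalso
        rcases h with h|h|h|h|⟨a,ha⟩|⟨a,ha⟩
        · omega
        · omega
        · omega
        · omega
        · have hp : (1:ℕ) ≤ 2^a := Nat.one_le_two_pow
          omega
        · have hp : (1:ℕ) ≤ 2^a := Nat.one_le_two_pow
          omega
      · have hrec := R4 k
        have hp1 := W_pos (3 * k + 2)
        have hp2 := W_pos (2 * k + 1)
        by_cases hw : W 2 3 (3 * k + 2) = 1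
        · have hA := ihW1 (3 * k + 2) (by omega) hw
          rcases hA with h|h|⟨a,ha⟩
          · exact absurd h (by omega)
          · exact absurd h (by omega)
          · have hp : (1:ℕ) ≤ 2^a := Nat.one_le_two_pow
            have hs := pow2_succ a
            have hg : 2 ≤ W 2 3 (2 * k + 1) := by
              by_cases hw2 : W 2 3 (2 * k + 1) = 1
              · exfalso
                have hB := ihW1 (2 * k + 1) (by omega) hw2
                rcases hB with h'|h'|⟨c,hc⟩
                · omega
                · omega
                · have hpc : (1:ℕ) ≤ 2^c := Nat.one_le_two_pow
                  exact three_not_dvd_pow2 (a + 1) ⟨2^c, by omega⟩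
              · omega
            omega
        · omega
    · -- U % 6 = 5
      obtain ⟨k, rfl⟩ : ∃ k, U = 6 * k + 5 := ⟨U / 6, by omega⟩
      refine ⟨fun h => ?_, fun h => ?_, fun h1 h2 => ?_⟩
      · rcases h with h|h|⟨a,ha⟩
        · exact absurd h (by omega)
        · exact absurd h (by omega)
        · have hp : (1:ℕ) ≤ 2^a := Nat.one_le_two_pow
          cases a with
          | zero => rw [pow_zero] at ha; exact absurd ha (by omega)
          | succ b =>
              have hb : (1:ℕ) ≤ 2^b := Nat.one_le_two_pow
              have hs := pow2_succ b
              rw [R5 k]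
              exact ihS1 (3 * k + 2) (by omega) (Or.inr (Or.inr ⟨b, by omega⟩))
      · rcases h with h|h|h|h|⟨a,ha⟩|⟨a,ha⟩
        · exact absurd h (by omega)
        · exact absurd h (by omega)
        · exact absurd h (by omega)
        · exact absurd h (by omega)
        · have hp : (1:ℕ) ≤ 2^a := Nat.one_le_two_pow
          cases a with
          | zero => rw [pow_zero] at ha; exact absurd ha (by omega)
          | succ b =>
              have hb : (1:ℕ) ≤ 2^b := Nat.one_le_two_pow
              have hs := pow2_succ b
              rw [R5 k]
              exact ihS2 (3 * k + 2) (by omega)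
                (Or.inr (Or.inr (Or.inr (Or.inr (Or.inl ⟨b, by omega⟩)))))
        · have hp : (1:ℕ) ≤ 2^a := Nat.one_le_two_pow
          cases a with
          | zero => rw [pow_zero] at ha; exact absurd ha (by omega)
          | succ b =>
              have hb : (1:ℕ) ≤ 2^b := Nat.one_le_two_pow
              have hs := pow2_succ b
              rw [R5 k]
              exact ihS2 (3 * k + 2) (by omega)
                (Or.inr (Or.inr (Or.inr (Or.inr (Or.inr ⟨b, by omega⟩)))))
      · rw [R5 k]
        apply ihge (3 * k + 2) (by omega)
        · intro hs
          rcases hs with h|h|⟨a,ha⟩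
          · omega
          · omega
          · have hp : (1:ℕ) ≤ 2^a := Nat.one_le_two_pow
            have hs' := pow2_succ a
            exact h1 (Or.inr (Or.inr ⟨a + 1, by omega⟩))
        · intro hs
          rcases hs with h|h|h|h|⟨a,ha⟩|⟨a,ha⟩
          · omega
          · omega
          · omega
          · omega
          · have hp : (1:ℕ) ≤ 2^a := Nat.one_le_two_pow
            have hs' := pow2_succ a
            exact h2 (Or.inr (Or.inr (Or.inr (Or.inr (Or.inl ⟨a + 1, by omega⟩)))))
          · have hp : (1:ℕ) ≤ 2^a := Nat.one_le_two_pow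
            have hs' := pow2_succ a
            exact h2 (Or.inr (Or.inr (Or.inr (Or.inr (Or.inr ⟨a + 1, by omega⟩)))))

theorem W_eq_two_iff (U : ℕ) :
    W 2 3 U = 2 ↔
      U = 3 ∨ U = 4 ∨ U = 6 ∨ U = 7 ∨
      (∃ a : ℕ, U = 9 * 2 ^ a - 1) ∨ (∃ a : ℕ, U = 15 * 2 ^ a - 1) := by
  constructor
  · intro h
    by_cases h2 : inS2 U
    · exact h2
    by_cases h1 : inS1 U
    · have := (classify U).1 h1
      omega
    · have := (classify U).2.2 h1 h2
      omega
  · intro h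
    exact (classify U).2.1 h
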